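/- If a noncrossing partition π of an n-element totally ordered set has j classes, then its Kreweras complementation map KC(π) has exactly n - j + 1 classes. -/

import Mathlib

/-- A partition of the totally ordered set `Fin n` is noncrossing. -/
def IsNoncrossing {n : ℕ} (P : Finpartition (Finset.univ : Finset (Fin n))) : Prop :=
  ¬ ∃ p₁ q₁ p₂ q₂ : Fin n, p₁ < q₁ ∧ q₁ < p₂ ∧ p₂ < q₂ ∧
      ∃ B ∈ P.parts, ∃ C ∈ P.parts, B ≠ C ∧ p₁ ∈ B ∧ p₂ ∈ B ∧ q₁ ∈ C ∧ q₂ ∈ C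

/-- Halve an index of the interlaced set `1,1̄,2,2̄,…,n,n̄` (element `i` of the original
copy sits at position `2i`, element `ī` of the barred copy at position `2i+1`). -/
def half {n : ℕ} (x : Fin (2 * n)) : Fin n := ⟨x.val / 2, by omega⟩

/-- `x` and `y` of the interlaced set lie in the same class of the union partition
`π ∪ σ`, where `π` partitions the original copy (even positions) and `σ` the barred
copy (odd positions). -/
def togetherIn {n : ℕ} (π σ : Finpartition (Finset.univ : Finset (Fin n)))
    (x y : Fin (2 * n)) : Prop :=
  (x.val % 2 = 0 ∧ y.val % 2 = 0 ∧ ∃ B ∈ π.parts, half x ∈ B ∧ half y ∈ B) ∨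
  (x.val % 2 = 1 ∧ y.val % 2 = 1 ∧ ∃ B ∈ σ.parts, half x ∈ B ∧ half y ∈ B)

/-- The union `π ∪ σ` is a noncrossing partition of the interlaced `2n`-element set
`1,1̄,2,2̄,…,n,n̄`. -/
def InterlacedNoncrossing {n : ℕ}
    (π σ : Finpartition (Finset.univ : Finset (Fin n))) : Prop :=
  ¬ ∃ p₁ q₁ p₂ q₂ : Fin (2 * n), p₁ < q₁ ∧ q₁ < p₂ ∧ p₂ < q₂ ∧
      togetherIn π σ p₁ p₂ ∧ togetherIn π σ q₁ q₂ ∧ ¬ togetherIn π σ p₁ q₁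

/-- `σ'` refines `σ`: every class of `σ'` is contained in a class of `σ`. -/
def Refines {n : ℕ} (σ' σ : Finpartition (Finset.univ : Finset (Fin n))) : Prop :=
  ∀ B ∈ σ'.parts, ∃ C ∈ σ.parts, B ⊆ C

namespace KrewerasAux

open Finset

open scoped Classical

variable {n : ℕ}

/-! ### Same-part relation and counting parts by class maxima -/

/-- Same-part relation of a finpartition. -/
def spart (P : Finpartition (Finset.univ : Finset (Fin n))) (a b : Fin n) : Prop :=
  ∃ B ∈ P.parts, a ∈ B ∧ b ∈ B

lemma spart_refl (P : Finpartition (Finset.univ : Finset (Fin n))) (a : Fin n) :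
    spart P a a := by
  obtain ⟨B, hB, haB⟩ := P.exists_mem (Finset.mem_univ a)
  exact ⟨B, hB, haB, haB⟩

lemma spart_symm {P : Finpartition (Finset.univ : Finset (Fin n))} {a b : Fin n}
    (h : spart P a b) : spart P b a := by
  obtain ⟨B, hB, ha, hb⟩ := h; exact ⟨B, hB, hb, ha⟩

lemma spart_trans {P : Finpartition (Finset.univ : Finset (Fin n))} {a b c : Fin n}
    (h1 : spart P a b) (h2 : spart P b c) : spart P a c := by
  obtain ⟨B, hB, ha, hb⟩ := h1
  obtain ⟨C, hC, hb', hc⟩ := h2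
  exact ⟨B, hB, ha, (P.eq_of_mem_parts hB hC hb hb') ▸ hc⟩

/-- The set of elements that are maximal in their class. -/
noncomputable def maxSet (R : Fin n → Fin n → Prop) : Finset (Fin n) :=
  Finset.univ.filter (fun u => ∀ v, u < v → ¬ R u v)

/-- The set of elements that are not maximal in their class. -/
noncomputable def nonmaxSet (R : Fin n → Fin n → Prop) : Finset (Fin n) :=
  Finset.univ.filter (fun u => ∃ v, u < v ∧ R u v)

lemma maxSet_card_add_nonmaxSet_card (R : Fin n → Fin n → Prop) :
    (maxSet R).card + (nonmaxSet R).card = n := by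
  have h := Finset.card_filter_add_card_filter_not
    (s := (Finset.univ : Finset (Fin n))) (p := fun u => ∀ v, u < v → ¬ R u v)
  rw [Finset.card_univ, Fintype.card_fin] at h
  have h2 : (Finset.univ.filter (fun u => ¬ ∀ v, u < v → ¬ R u v)) = nonmaxSet R := by
    apply Finset.filter_congr; intro u _
    constructor
    · intro hu; push_neg at hu; exact hu
    · intro ⟨v, hv, hR⟩ hall; exact hall v hv hR
  rw [h2] at h; exact h

lemma maxSet_congr {R R' : Fin n → Fin n → Prop} (h : ∀ u v, R u v ↔ R' u v) :
    maxSet R = maxSet R' := by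
  apply Finset.filter_congr; intro u _; simp only [h]

lemma parts_card_eq_maxSet_card (P : Finpartition (Finset.univ : Finset (Fin n))) :
    P.parts.card = (maxSet (spart P)).card := by
  symm
  apply Finset.card_bij (fun u _ => P.part u)
  · intro u _; exact P.part_mem.2 (Finset.mem_univ u)
  · intro u1 hu1 u2 hu2 heq
    simp only [maxSet, Finset.mem_filter] at hu1 hu2
    have h12 : spart P u1 u2 :=
      ⟨P.part u1, P.part_mem.2 (Finset.mem_univ u1), P.mem_part_self.2 (Finset.mem_univ u1),
        heq ▸ P.mem_part_self.2 (Finset.mem_univ u2)⟩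
    rcases lt_trichotomy u1 u2 with h | h | h
    · exact absurd h12 (hu1.2 u2 h)
    · exact h
    · exact absurd (spart_symm h12) (hu2.2 u1 h)
  · intro B hB
    have hne := P.nonempty_of_mem_parts hB
    refine ⟨B.max' hne, ?_, P.part_eq_of_mem hB (B.max'_mem hne)⟩
    simp only [maxSet, Finset.mem_filter]
    refine ⟨Finset.mem_univ _, fun v hv ⟨C, hC, huC, hvC⟩ => ?_⟩
    have : C = B := P.eq_of_mem_parts hC hB huC (B.max'_mem hne)
    exact absurd (B.le_max' v (this ▸ hvC)) (not_le.2 hv)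

/-! ### Abstract arc systems -/

/-- Abstract noncrossing parity arc system in `{0, …, N-1}`. -/
def ArcOK (N : ℕ) (A : Finset (ℕ × ℕ)) : Prop :=
  (∀ a ∈ A, a.1 < a.2 ∧ a.2 < N ∧ (a.1 + a.2) % 2 = 0) ∧
  (∀ a ∈ A, ∀ b ∈ A, a.1 = b.1 → a = b) ∧
  (∀ a ∈ A, ∀ b ∈ A, a.2 = b.2 → a = b) ∧
  (∀ a ∈ A, ∀ b ∈ A, ¬(a.1 < b.1 ∧ b.1 < a.2 ∧ a.2 < b.2))

lemma arc_shrink {N c : ℕ} (hc : c + 2 ≤ N) {A : Finset (ℕ × ℕ)} (hA : ArcOK N A)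
    (hfree : ∀ a ∈ A, a.1 ≠ c ∧ a.1 ≠ c + 1 ∧ a.2 ≠ c ∧ a.2 ≠ c + 1) :
    ∃ A' : Finset (ℕ × ℕ), ArcOK (N - 2) A' ∧ A'.card = A.card := by
  obtain ⟨hb, hl, hr, hx⟩ := hA
  set r : ℕ → ℕ := fun t => if t < c then t else t - 2 with hrdef
  have hmono : ∀ s t : ℕ, s ≠ c → s ≠ c + 1 → t ≠ c → t ≠ c + 1 → (s < t ↔ r s < r t) := by
    intro s t h1 h2 h3 h4; simp only [hrdef]; split_ifs <;> omega
  have hinj : ∀ s t : ℕ, s ≠ c → s ≠ c + 1 → t ≠ c → t ≠ c + 1 → r s = r t → s = t := by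
    intro s t h1 h2 h3 h4 h; rcases lt_trichotomy s t with h' | h' | h'
    · rw [hmono s t h1 h2 h3 h4] at h'; omega
    · exact h'
    · rw [hmono t s h3 h4 h1 h2] at h'; omega
  have hpinj : ∀ a ∈ A, ∀ b ∈ A, (r a.1, r a.2) = (r b.1, r b.2) → a = b := by
    intro a ha b hbm heq
    obtain ⟨ha1, ha2, _, _⟩ := hfree a ha
    obtain ⟨hb1, hb2, _, _⟩ := hfree b hbm
    have := hinj a.1 b.1 ha1 ha2 hb1 hb2 (congrArg Prod.fst heq)
    exact hl a ha b hbm this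
  refine ⟨A.image (fun a => (r a.1, r a.2)), ⟨?_, ?_, ?_, ?_⟩, Finset.card_image_of_injOn (fun a ha b hbm heq => hpinj a ha b hbm heq)⟩
  · intro a' ha'
    obtain ⟨a, ha, rfl⟩ := Finset.mem_image.1 ha'
    obtain ⟨h1, h2, h3, h4⟩ := hfree a ha
    obtain ⟨hlt, hN, hpar⟩ := hb a ha
    refine ⟨(hmono _ _ h1 h2 h3 h4).1 hlt, ?_, ?_⟩ <;>
      · simp only [hrdef]; split_ifs <;> omega
  · intro a' ha' b' hb' heq
    obtain ⟨a, ha, rfl⟩ := Finset.mem_image.1 ha'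
    obtain ⟨b, hbm, rfl⟩ := Finset.mem_image.1 hb'
    obtain ⟨h1, h2, _, _⟩ := hfree a ha
    obtain ⟨h5, h6, _, _⟩ := hfree b hbm
    rw [hl a ha b hbm (hinj _ _ h1 h2 h5 h6 heq)]
  · intro a' ha' b' hb' heq
    obtain ⟨a, ha, rfl⟩ := Finset.mem_image.1 ha'
    obtain ⟨b, hbm, rfl⟩ := Finset.mem_image.1 hb'
    obtain ⟨_, _, h3, h4⟩ := hfree a ha
    obtain ⟨_, _, h7, h8⟩ := hfree b hbm
    rw [hr a ha b hbm (hinj _ _ h3 h4 h7 h8 heq)]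
  · intro a' ha' b' hb' hcross
    obtain ⟨a, ha, rfl⟩ := Finset.mem_image.1 ha'
    obtain ⟨b, hbm, rfl⟩ := Finset.mem_image.1 hb'
    obtain ⟨h1, h2, h3, h4⟩ := hfree a ha
    obtain ⟨h5, h6, h7, h8⟩ := hfree b hbm
    exact hx a ha b hbm ⟨(hmono _ _ h1 h2 h5 h6).2 hcross.1,
      (hmono _ _ h5 h6 h3 h4).2 hcross.2.1, (hmono _ _ h3 h4 h7 h8).2 hcross.2.2⟩

lemma arc_card_le : ∀ (m : ℕ) (A : Finset (ℕ × ℕ)), ArcOK (2 * m) A → A.card ≤ m - 1 := by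
  intro m
  induction m with
  | zero =>
    intro A hA
    have hAe : A = ∅ := by
      rw [Finset.eq_empty_iff_forall_notMem]
      intro a ha; have := hA.1 a ha; omega
    simp [hAe]
  | succ k ih =>
    intro A hA
    rcases A.eq_empty_or_nonempty with rfl | hne
    · simp
    obtain ⟨a, haA, hmin⟩ := A.exists_min_image (fun b => b.2 - b.1) hne
    obtain ⟨hb, hl, hr, hx⟩ := hA
    obtain ⟨hlt, hN, hpar⟩ := hb a haA
    have hAcard : 1 ≤ A.card := Finset.card_pos.2 hne
    -- interior of the minimal arc is free
    have hint1 : ∀ b ∈ A, ¬(a.1 < b.1 ∧ b.1 < a.2) := by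
      rintro b hbm ⟨h1, h2⟩
      obtain ⟨hblt, hbN, hbpar⟩ := hb b hbm
      have h4 : b.2 ≤ a.2 := by
        by_contra h; exact hx a haA b hbm ⟨h1, h2, by omega⟩
      have h5 : b.2 ≠ a.2 := by
        intro he; have hba := hr b hbm a haA he; subst hba; omega
      have := hmin b hbm
      omega
    have hint2 : ∀ b ∈ A, ¬(a.1 < b.2 ∧ b.2 < a.2) := by
      rintro b hbm ⟨h1, h2⟩
      obtain ⟨hblt, hbN, hbpar⟩ := hb b hbm
      rcases lt_trichotomy b.1 a.1 with h | h | h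
      · exact hx b hbm a haA ⟨h, h1, h2⟩
      · have hba := hl b hbm a haA h; subst hba; omega
      · exact hint1 b hbm ⟨h, by omega⟩
    by_cases hy : a.2 = a.1 + 2
    · -- short arc : delete its left endpoint and the interior point
      have hk1 : 1 ≤ k := by omega
      set g : ℕ × ℕ → ℕ × ℕ := fun b => (b.1, if b.2 = a.1 then a.2 else b.2) with hgdef
      have herase : ∀ b ∈ A.erase a, b ∈ A ∧ b.1 ≠ a.1 ∧ b.1 ≠ a.1 + 1 ∧ b.2 ≠ a.1 + 1 ∧
          b.2 ≠ a.2 := by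
        intro b hbm
        have hbA : b ∈ A := Finset.mem_of_mem_erase hbm
        have hbne : b ≠ a := Finset.ne_of_mem_erase hbm
        refine ⟨hbA, ?_, ?_, ?_, ?_⟩
        · intro h; exact hbne (hl b hbA a haA h)
        · intro h; exact hint1 b hbA ⟨by omega, by omega⟩
        · intro h; exact hint2 b hbA ⟨by omega, by omega⟩
        · intro h; exact hbne (hr b hbA a haA h)
      have hginj : ∀ b ∈ A.erase a, ∀ b' ∈ A.erase a, g b = g b' → b = b' := by
        intro b hbm b' hbm' heq
        have h := congrArg Prod.fst heq
        exact hl b (herase b hbm).1 b' (herase b' hbm').1 h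
      have hBcard : ((A.erase a).image g).card = A.card - 1 := by
        rw [Finset.card_image_of_injOn (fun b hb1 b' hb2 he => hginj b hb1 b' hb2 he),
          Finset.card_erase_of_mem haA]
      have hBOK : ArcOK (2 * (k + 1)) ((A.erase a).image g) := by
        refine ⟨?_, ?_, ?_, ?_⟩
        · intro b' hb'
          obtain ⟨b, hbm, rfl⟩ := Finset.mem_image.1 hb'
          obtain ⟨hbA, h1, h2, h3, h4⟩ := herase b hbm
          obtain ⟨hblt, hbN, hbpar⟩ := hb b hbA
          simp only [hgdef]; split_ifs with h <;> refine ⟨by omega, by omega, by omega⟩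
        · intro b1 hb1 b2 hb2 heq
          obtain ⟨c1, hc1, rfl⟩ := Finset.mem_image.1 hb1
          obtain ⟨c2, hc2, rfl⟩ := Finset.mem_image.1 hb2
          rw [hginj c1 hc1 c2 hc2 (by
            have h1 := hl c1 (herase c1 hc1).1 c2 (herase c2 hc2).1 heq
            rw [h1])]
        · intro b1 hb1 b2 hb2 heq
          obtain ⟨c1, hc1, rfl⟩ := Finset.mem_image.1 hb1
          obtain ⟨c2, hc2, rfl⟩ := Finset.mem_image.1 hb2
          obtain ⟨hc1A, h1, h2, h3, h4⟩ := herase c1 hc1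
          obtain ⟨hc2A, h5, h6, h7, h8⟩ := herase c2 hc2
          simp only [hgdef] at heq
          have hc12 : c1 = c2 := by
            split_ifs at heq with i1 i2 i2
            · exact hr c1 hc1A c2 hc2A (i1.trans i2.symm)
            · exact absurd (hr c2 hc2A a haA heq.symm) (Finset.ne_of_mem_erase hc2)
            · exact absurd (hr c1 hc1A a haA heq) (Finset.ne_of_mem_erase hc1)
            · exact hr c1 hc1A c2 hc2A heq
          rw [hc12]
        · intro b1 hb1 b2 hb2 hcross
          obtain ⟨c1, hc1, rfl⟩ := Finset.mem_image.1 hb1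
          obtain ⟨c2, hc2, rfl⟩ := Finset.mem_image.1 hb2
          obtain ⟨hc1A, h1, h2, h3, h4⟩ := herase c1 hc1
          obtain ⟨hc2A, h5, h6, h7, h8⟩ := herase c2 hc2
          obtain ⟨hlt1, hN1, hp1⟩ := hb c1 hc1A
          obtain ⟨hlt2, hN2, hp2⟩ := hb c2 hc2A
          simp only [hgdef] at hcross
          split_ifs at hcross with i1 i2 i2
          · omega
          · exact hx c1 hc1A c2 hc2A ⟨hcross.1, by omega, by omega⟩
          · exact hx c1 hc1A c2 hc2A ⟨hcross.1, by omega, by omega⟩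
          · exact hx c1 hc1A c2 hc2A hcross
      have hfree : ∀ b ∈ (A.erase a).image g,
          b.1 ≠ a.1 ∧ b.1 ≠ a.1 + 1 ∧ b.2 ≠ a.1 ∧ b.2 ≠ a.1 + 1 := by
        intro b' hb'
        obtain ⟨b, hbm, rfl⟩ := Finset.mem_image.1 hb'
        obtain ⟨hbA, h1, h2, h3, h4⟩ := herase b hbm
        obtain ⟨hblt, hbN, hbpar⟩ := hb b hbA
        simp only [hgdef]; split_ifs with h <;> refine ⟨h1, h2, by omega, by omega⟩
      obtain ⟨A', hA', hcard'⟩ := arc_shrink (by omega) hBOK hfree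
      have h2k : 2 * (k + 1) - 2 = 2 * k := by omega
      rw [h2k] at hA'
      have := ih A' hA'
      omega
    · -- long arc : delete two free interior points
      have hlong : a.1 + 4 ≤ a.2 := by omega
      have hfree : ∀ b ∈ A, b.1 ≠ a.1 + 1 ∧ b.1 ≠ a.1 + 2 ∧ b.2 ≠ a.1 + 1 ∧ b.2 ≠ a.1 + 2 := by
        intro b hbm
        refine ⟨?_, ?_, ?_, ?_⟩ <;> intro h
        · exact hint1 b hbm ⟨by omega, by omega⟩
        · exact hint1 b hbm ⟨by omega, by omega⟩
        · exact hint2 b hbm ⟨by omega, by omega⟩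
        · exact hint2 b hbm ⟨by omega, by omega⟩
      obtain ⟨A', hA', hcard'⟩ := arc_shrink (c := a.1 + 1) (by omega) ⟨hb, hl, hr, hx⟩ hfree
      have h2k : 2 * (k + 1) - 2 = 2 * k := by omega
      rw [h2k] at hA'
      have := ih A' hA'
      omega

/-! ### Lower bound: at least `n+1` classes in total -/

/-- The next element of the class of `u`, when it exists. -/
noncomputable def nxt (P : Finpartition (Finset.univ : Finset (Fin n))) (u : Fin n) : Fin n :=
  if h : (Finset.univ.filter (fun v => u < v ∧ spart P u v)).Nonempty
  then (Finset.univ.filter (fun v => u < v ∧ spart P u v)).min' h else u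

lemma nxt_spec (P : Finpartition (Finset.univ : Finset (Fin n))) {u : Fin n}
    (hu : u ∈ nonmaxSet (spart P)) :
    u < nxt P u ∧ spart P u (nxt P u) ∧ ∀ w, u < w → w < nxt P u → ¬ spart P u w := by
  simp only [nonmaxSet, Finset.mem_filter] at hu
  obtain ⟨-, v, hv, hR⟩ := hu
  have hne : (Finset.univ.filter (fun v => u < v ∧ spart P u v)).Nonempty :=
    ⟨v, by simp [hv, hR]⟩
  rw [nxt, dif_pos hne]
  have hmem := Finset.min'_mem _ hne
  simp only [Finset.mem_filter, Finset.mem_univ, true_and] at hmem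
  refine ⟨hmem.1, hmem.2, fun w hw1 hw2 hsp => ?_⟩
  have hwm : w ∈ Finset.univ.filter (fun v => u < v ∧ spart P u v) := by
    simp [hw1, hsp]
  exact absurd hw2 (not_lt.2 (Finset.min'_le _ w hwm))

lemma nxt_inj (P : Finpartition (Finset.univ : Finset (Fin n))) {u u' : Fin n}
    (hu : u ∈ nonmaxSet (spart P)) (hu' : u' ∈ nonmaxSet (spart P))
    (h : nxt P u = nxt P u') : u = u' := by
  have key : ∀ w w', w ∈ nonmaxSet (spart P) → w' ∈ nonmaxSet (spart P) →
      nxt P w = nxt P w' → w < w' → False := by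
    intro w w' hw hw' he hlt
    obtain ⟨h1, h2, h3⟩ := nxt_spec P hw
    obtain ⟨h1', h2', h3'⟩ := nxt_spec P hw'
    have hsp : spart P w w' := spart_trans h2 (he ▸ spart_symm h2')
    exact h3 w' hlt (he ▸ h1') hsp
  rcases lt_trichotomy u u' with h' | h' | h'
  · exact absurd (key u u' hu hu' h h') id
  · exact h'
  · exact absurd (key u' u hu' hu h.symm h') id

lemma half_even (w : Fin n) (h : 2 * w.1 < 2 * n) : half (⟨2 * w.1, h⟩ : Fin (2 * n)) = w := by
  apply Fin.ext; show 2 * w.1 / 2 = w.1; omega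

lemma half_odd (w : Fin n) (h : 2 * w.1 + 1 < 2 * n) :
    half (⟨2 * w.1 + 1, h⟩ : Fin (2 * n)) = w := by
  apply Fin.ext; show (2 * w.1 + 1) / 2 = w.1; omega

lemma total_ge (π σ : Finpartition (Finset.univ : Finset (Fin n)))
    (hun : InterlacedNoncrossing π σ) :
    (nonmaxSet (spart π)).card + (nonmaxSet (spart σ)).card ≤ n - 1 := by
  classical
  set Sp := nonmaxSet (spart π) with hSp
  set Ss := nonmaxSet (spart σ) with hSs
  set fπ : Fin n → ℕ × ℕ := fun u => (2 * u.1, 2 * (nxt π u).1) with hfπ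
  set fσ : Fin n → ℕ × ℕ := fun u => (2 * u.1 + 1, 2 * (nxt σ u).1 + 1) with hfσ
  set A := Sp.image fπ ∪ Ss.image fσ with hA
  have hmem : ∀ a ∈ A, (∃ u ∈ Sp, fπ u = a) ∨ (∃ u ∈ Ss, fσ u = a) := by
    intro a ha
    rcases Finset.mem_union.1 ha with h | h
    · exact Or.inl (Finset.mem_image.1 h)
    · exact Or.inr (Finset.mem_image.1 h)
  -- cardinality
  have hcard : A.card = Sp.card + Ss.card := by
    rw [hA, Finset.card_union_of_disjoint, Finset.card_image_of_injOn,
      Finset.card_image_of_injOn]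
    · intro u _ u' _ he
      have : 2 * u.1 + 1 = 2 * u'.1 + 1 := congrArg Prod.fst he
      exact Fin.ext (by omega)
    · intro u _ u' _ he
      have : 2 * u.1 = 2 * u'.1 := congrArg Prod.fst he
      exact Fin.ext (by omega)
    · rw [Finset.disjoint_left]
      intro a ha hb
      obtain ⟨u, _, rfl⟩ := Finset.mem_image.1 ha
      obtain ⟨u', _, he⟩ := Finset.mem_image.1 hb
      have : 2 * u'.1 + 1 = 2 * u.1 := congrArg Prod.fst he
      omega
  -- the contradiction builder
  have hno : ∀ (x1 y1 x2 y2 : Fin (2 * n)), x1 < y1 → y1 < x2 → x2 < y2 →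
      togetherIn π σ x1 x2 → togetherIn π σ y1 y2 → ¬ togetherIn π σ x1 y1 → False := by
    intro x1 y1 x2 y2 h1 h2 h3 t1 t2 t3
    exact hun ⟨x1, y1, x2, y2, h1, h2, h3, t1, t2, t3⟩
  have harcOK : ArcOK (2 * n) A := by
    have hbound : ∀ a ∈ A, a.1 < a.2 ∧ a.2 < 2 * n ∧ (a.1 + a.2) % 2 = 0 := by
      intro a ha
      rcases hmem a ha with ⟨u, hu, rfl⟩ | ⟨u, hu, rfl⟩
      · have h1 := (nxt_spec π hu).1
        have h2 := (nxt π u).2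
        simp only [hfπ]
        refine ⟨by simpa [Nat.mul_lt_mul_left] using h1, by omega, by omega⟩
      · have h1 := (nxt_spec σ hu).1
        have h2 := (nxt σ u).2
        simp only [hfσ]
        have : u.1 < (nxt σ u).1 := h1
        refine ⟨by omega, by omega, by omega⟩
    refine ⟨hbound, ?_, ?_, ?_⟩
    · intro a ha b hb he
      rcases hmem a ha with ⟨u, hu, rfl⟩ | ⟨u, hu, rfl⟩ <;>
        rcases hmem b hb with ⟨u', hu', rfl⟩ | ⟨u', hu', rfl⟩ <;>
        simp only [hfπ, hfσ] at he ⊢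
      · have : u = u' := Fin.ext (by omega); rw [this]
      · omega
      · omega
      · have : u = u' := Fin.ext (by omega); rw [this]
    · intro a ha b hb he
      rcases hmem a ha with ⟨u, hu, rfl⟩ | ⟨u, hu, rfl⟩ <;>
        rcases hmem b hb with ⟨u', hu', rfl⟩ | ⟨u', hu', rfl⟩ <;>
        simp only [hfπ, hfσ] at he ⊢
      · have h2 : nxt π u = nxt π u' := Fin.ext (by omega)
        rw [nxt_inj π hu hu' h2]
      · omega
      · omega
      · have h2 : nxt σ u = nxt σ u' := Fin.ext (by omega)
        rw [nxt_inj σ hu hu' h2]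
    · intro a ha b hb hcross
      rcases hmem a ha with ⟨u, hu, rfl⟩ | ⟨u, hu, rfl⟩ <;>
        rcases hmem b hb with ⟨u', hu', rfl⟩ | ⟨u', hu', rfl⟩ <;>
        simp only [hfπ, hfσ] at hcross
      -- ππ
      · obtain ⟨hu1, hu2, hu3⟩ := nxt_spec π hu
        obtain ⟨hv1, hv2, hv3⟩ := nxt_spec π hu'
        obtain ⟨B, hB, hB1, hB2⟩ := hu2
        obtain ⟨C, hC, hC1, hC2⟩ := hv2
        have b1 : 2 * u.1 < 2 * n := by omega
        have b2 : 2 * u'.1 < 2 * n := by omega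
        have b3 : 2 * (nxt π u).1 < 2 * n := by have := (nxt π u).2; omega
        have b4 : 2 * (nxt π u').1 < 2 * n := by have := (nxt π u').2; omega
        refine hno ⟨_, b1⟩ ⟨_, b2⟩ ⟨_, b3⟩ ⟨_, b4⟩ (by simpa using hcross.1)
          (by simpa using hcross.2.1) (by simpa using hcross.2.2) ?_ ?_ ?_
        · exact Or.inl ⟨by show 2 * u.1 % 2 = 0; omega, by show 2 * (nxt π u).1 % 2 = 0; omega,
            B, hB, by rwa [half_even u b1], by rwa [half_even (nxt π u) b3]⟩
        · exact Or.inl ⟨by show 2 * u'.1 % 2 = 0; omega, by show 2 * (nxt π u').1 % 2 = 0; omega,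
            C, hC, by rwa [half_even u' b2], by rwa [half_even (nxt π u') b4]⟩
        · rintro (⟨-, -, D, hD, hD1, hD2⟩ | ⟨h, -⟩)
          · rw [half_even u b1] at hD1
            rw [half_even u' b2] at hD2
            have husp : spart π u u' := ⟨D, hD, hD1, hD2⟩
            have hlt1 : u < u' := Fin.lt_def.2 (by omega)
            have hlt2 : u' < nxt π u := Fin.lt_def.2 (by omega)
            exact hu3 u' hlt1 hlt2 husp
          · exact absurd h (by show ¬ (2 * u.1) % 2 = 1; omega)
      -- πσ
      · obtain ⟨hu1, hu2, hu3⟩ := nxt_spec π hu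
        obtain ⟨hv1, hv2, hv3⟩ := nxt_spec σ hu'
        obtain ⟨B, hB, hB1, hB2⟩ := hu2
        obtain ⟨C, hC, hC1, hC2⟩ := hv2
        have b1 : 2 * u.1 < 2 * n := by omega
        have b2 : 2 * u'.1 + 1 < 2 * n := by omega
        have b3 : 2 * (nxt π u).1 < 2 * n := by have := (nxt π u).2; omega
        have b4 : 2 * (nxt σ u').1 + 1 < 2 * n := by have := (nxt σ u').2; omega
        refine hno ⟨_, b1⟩ ⟨_, b2⟩ ⟨_, b3⟩ ⟨_, b4⟩ (by simpa using hcross.1)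
          (by simpa using hcross.2.1) (by simpa using hcross.2.2) ?_ ?_ ?_
        · exact Or.inl ⟨by show 2 * u.1 % 2 = 0; omega, by show 2 * (nxt π u).1 % 2 = 0; omega,
            B, hB, by rwa [half_even u b1], by rwa [half_even (nxt π u) b3]⟩
        · exact Or.inr ⟨by show (2 * u'.1 + 1) % 2 = 1; omega,
            by show (2 * (nxt σ u').1 + 1) % 2 = 1; omega,
            C, hC, by rwa [half_odd u' b2], by rwa [half_odd (nxt σ u') b4]⟩
        · rintro (⟨-, h, -⟩ | ⟨h, -⟩)
          · exact absurd h (by show ¬ (2 * u'.1 + 1) % 2 = 0; omega)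
          · exact absurd h (by show ¬ (2 * u.1) % 2 = 1; omega)
      -- σπ
      · obtain ⟨hu1, hu2, hu3⟩ := nxt_spec σ hu
        obtain ⟨hv1, hv2, hv3⟩ := nxt_spec π hu'
        obtain ⟨B, hB, hB1, hB2⟩ := hu2
        obtain ⟨C, hC, hC1, hC2⟩ := hv2
        have b1 : 2 * u.1 + 1 < 2 * n := by have := (nxt σ u).2; omega
        have b2 : 2 * u'.1 < 2 * n := by omega
        have b3 : 2 * (nxt σ u).1 + 1 < 2 * n := by have := (nxt σ u).2; omega
        have b4 : 2 * (nxt π u').1 < 2 * n := by have := (nxt π u').2; omega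
        refine hno ⟨_, b1⟩ ⟨_, b2⟩ ⟨_, b3⟩ ⟨_, b4⟩ (by simpa using hcross.1)
          (by simpa using hcross.2.1) (by simpa using hcross.2.2) ?_ ?_ ?_
        · exact Or.inr ⟨by show (2 * u.1 + 1) % 2 = 1; omega,
            by show (2 * (nxt σ u).1 + 1) % 2 = 1; omega,
            B, hB, by rwa [half_odd u b1], by rwa [half_odd (nxt σ u) b3]⟩
        · exact Or.inl ⟨by show 2 * u'.1 % 2 = 0; omega, by show 2 * (nxt π u').1 % 2 = 0; omega,
            C, hC, by rwa [half_even u' b2], by rwa [half_even (nxt π u') b4]⟩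
        · rintro (⟨h, -⟩ | ⟨-, h, -⟩)
          · exact absurd h (by show ¬ (2 * u.1 + 1) % 2 = 0; omega)
          · exact absurd h (by show ¬ (2 * u'.1) % 2 = 1; omega)
      -- σσ
      · obtain ⟨hu1, hu2, hu3⟩ := nxt_spec σ hu
        obtain ⟨hv1, hv2, hv3⟩ := nxt_spec σ hu'
        obtain ⟨B, hB, hB1, hB2⟩ := hu2
        obtain ⟨C, hC, hC1, hC2⟩ := hv2
        have b1 : 2 * u.1 + 1 < 2 * n := by have := (nxt σ u).2; omega
        have b2 : 2 * u'.1 + 1 < 2 * n := by have := (nxt σ u').2; omega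
        have b3 : 2 * (nxt σ u).1 + 1 < 2 * n := by have := (nxt σ u).2; omega
        have b4 : 2 * (nxt σ u').1 + 1 < 2 * n := by have := (nxt σ u').2; omega
        refine hno ⟨_, b1⟩ ⟨_, b2⟩ ⟨_, b3⟩ ⟨_, b4⟩ (by simpa using hcross.1)
          (by simpa using hcross.2.1) (by simpa using hcross.2.2) ?_ ?_ ?_
        · exact Or.inr ⟨by show (2 * u.1 + 1) % 2 = 1; omega,
            by show (2 * (nxt σ u).1 + 1) % 2 = 1; omega,
            B, hB, by rwa [half_odd u b1], by rwa [half_odd (nxt σ u) b3]⟩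
        · exact Or.inr ⟨by show (2 * u'.1 + 1) % 2 = 1; omega,
            by show (2 * (nxt σ u').1 + 1) % 2 = 1; omega,
            C, hC, by rwa [half_odd u' b2], by rwa [half_odd (nxt σ u') b4]⟩
        · rintro (⟨h, -⟩ | ⟨-, -, D, hD, hD1, hD2⟩)
          · exact absurd h (by show ¬ (2 * u.1 + 1) % 2 = 0; omega)
          · rw [half_odd u b1] at hD1
            rw [half_odd u' b2] at hD2
            have husp : spart σ u u' := ⟨D, hD, hD1, hD2⟩
            have hlt1 : u < u' := Fin.lt_def.2 (by omega)
            have hlt2 : u' < nxt σ u := Fin.lt_def.2 (by omega)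
            exact hu3 u' hlt1 hlt2 husp
  have := arc_card_le n A harcOK
  omega

/-! ### The Kreweras complement relation -/

/-- The interval-separation relation: `u` and `v` are related when no `R`-related
pair is separated by the segment between `u` and `v`. -/
def kc (R : Fin n → Fin n → Prop) (u v : Fin n) : Prop :=
  ∀ p q, R p q → ((p ≤ u ↔ p ≤ v) ↔ (q ≤ u ↔ q ≤ v))

lemma kc_refl (R : Fin n → Fin n → Prop) (u : Fin n) : kc R u u := by
  intro p q _; tauto

lemma kc_symm {R : Fin n → Fin n → Prop} {u v : Fin n} (h : kc R u v) : kc R v u := by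
  intro p q hpq; have := h p q hpq; tauto

lemma kc_trans {R : Fin n → Fin n → Prop} {u v w : Fin n} (h1 : kc R u v)
    (h2 : kc R v w) : kc R u w := by
  intro p q hpq; have := h1 p q hpq; have := h2 p q hpq; tauto

/-- Noncrossing property for a relation. -/
def NCrel (R : Fin n → Fin n → Prop) : Prop :=
  ∀ p₁ q₁ p₂ q₂ : Fin n, p₁ < q₁ → q₁ < p₂ → p₂ < q₂ → R p₁ p₂ → R q₁ q₂ → R p₁ q₁

lemma isNoncrossing_iff_NCrel (P : Finpartition (Finset.univ : Finset (Fin n))) :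
    IsNoncrossing P ↔ NCrel (spart P) := by
  constructor
  · intro hP p1 q1 p2 q2 h1 h2 h3 hp hq
    by_contra hnot
    obtain ⟨B, hB, hB1, hB2⟩ := hp
    obtain ⟨C, hC, hC1, hC2⟩ := hq
    exact hP ⟨p1, q1, p2, q2, h1, h2, h3, B, hB, C, hC,
      fun he => hnot ⟨B, hB, hB1, by rw [he]; exact hC1⟩, hB1, hB2, hC1, hC2⟩
  · rintro hN ⟨p1, q1, p2, q2, h1, h2, h3, B, hB, C, hC, hne, m1, m2, m3, m4⟩
    obtain ⟨D, hD, d1, d2⟩ := hN p1 q1 p2 q2 h1 h2 h3 ⟨B, hB, m1, m2⟩ ⟨C, hC, m3, m4⟩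
    exact hne ((P.eq_of_mem_parts hB hD m1 d1).trans (P.eq_of_mem_parts hD hC d2 m3))

lemma NCrel_kc (R : Fin n → Fin n → Prop) (hsymm : ∀ a b, R a b → R b a) :
    NCrel (kc R) := by
  intro p1 q1 p2 q2 h1 h2 h3 h13 h24 p q hpq
  have A := h13 p q hpq
  have B := h24 p q hpq
  simp only [Fin.le_def, Fin.lt_def] at A B h1 h2 h3 ⊢
  omega

/-! ### Main counting lemma -/

lemma kc_count_base (hn : 1 ≤ n) (E : Fin n → Fin n → Prop)
    (hsymm : ∀ a b, E a b → E b a) (hempty : nonmaxSet E = ∅) :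
    (maxSet E).card + (maxSet (kc E)).card ≤ n + 1 := by
  have hdiag : ∀ a b, E a b → a = b := by
    intro a b hab
    rcases lt_trichotomy a b with h | h | h
    · exfalso
      have hm : a ∈ nonmaxSet E := by
        simp only [nonmaxSet, Finset.mem_filter, Finset.mem_univ, true_and]
        exact ⟨b, h, hab⟩
      rw [hempty] at hm; exact absurd hm (Finset.notMem_empty a)
    · exact h
    · exfalso
      have hm : b ∈ nonmaxSet E := by
        simp only [nonmaxSet, Finset.mem_filter, Finset.mem_univ, true_and]
        exact ⟨a, h, hsymm _ _ hab⟩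
      rw [hempty] at hm; exact absurd hm (Finset.notMem_empty b)
  have hmaxE : maxSet E = Finset.univ := by
    apply Finset.eq_univ_iff_forall.2
    intro u
    simp only [maxSet, Finset.mem_filter, Finset.mem_univ, true_and]
    exact fun v hv hEv => absurd (hdiag u v hEv) (ne_of_lt hv)
  have hkcall : ∀ u v : Fin n, kc E u v := fun u v p q hpq => by rw [hdiag p q hpq]
  have hmaxkc : maxSet (kc E) = {(⟨n - 1, by omega⟩ : Fin n)} := by
    ext u
    simp only [maxSet, Finset.mem_filter, Finset.mem_univ, true_and, Finset.mem_singleton]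
    constructor
    · intro h
      by_contra hne
      have hune : u.1 ≠ n - 1 := fun he => hne (Fin.ext he)
      have hu2 := u.2
      exact h ⟨u.1 + 1, by omega⟩ (Fin.lt_def.2 (show u.1 < u.1 + 1 by omega)) (hkcall _ _)
    · rintro rfl v hv _
      have := v.2
      simp only [Fin.lt_def] at hv
      omega
  rw [hmaxE, hmaxkc, Finset.card_univ, Fintype.card_fin, Finset.card_singleton]

lemma kc_count_aux (hn : 1 ≤ n) :
    ∀ (k : ℕ) (E : Fin n → Fin n → Prop),
      (∀ a, E a a) → (∀ a b, E a b → E b a) → (∀ a b c, E a b → E b c → E a c) →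
      NCrel E → (nonmaxSet E).card ≤ k →
      (maxSet E).card + (maxSet (kc E)).card ≤ n + 1 := by
  intro k
  induction k with
  | zero =>
    intro E hrefl hsymm htrans hnc hcard
    exact kc_count_base hn E hsymm (Finset.card_eq_zero.1 (Nat.le_zero.1 hcard))
  | succ k ih =>
    intro E hrefl hsymm htrans hnc hcard
    rcases (nonmaxSet E).eq_empty_or_nonempty with hemp | ⟨u₀, hu₀⟩
    · exact kc_count_base hn E hsymm hemp
    -- set up the class of `u₀`, its maximum `m`, second maximum `m'`, minimum `b₀`
    have hu₀' := Finset.mem_filter.1 hu₀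
    obtain ⟨v₀, hv₀lt, hv₀E⟩ := hu₀'.2
    set C : Finset (Fin n) := Finset.univ.filter (fun a => E u₀ a) with hCdef
    have hCne : C.Nonempty := ⟨u₀, by simp [hCdef, hrefl]⟩
    set m := C.max' hCne with hmdef
    have hmC : m ∈ C := C.max'_mem hCne
    have hEum : E u₀ m := (Finset.mem_filter.1 hmC).2
    have hmem_C : ∀ a, a ∈ C ↔ E m a := by
      intro a
      simp only [hCdef, Finset.mem_filter, Finset.mem_univ, true_and]
      exact ⟨fun h => htrans _ _ _ (hsymm _ _ hEum) h, fun h => htrans _ _ _ hEum h⟩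
    have hv₀C : v₀ ∈ C := by simp [hCdef, hv₀E]
    have hu₀m : u₀ < m := lt_of_lt_of_le hv₀lt (C.le_max' v₀ hv₀C)
    have hu₀C : u₀ ∈ C := by simp [hCdef, hrefl]
    have hDne : (C.erase m).Nonempty := ⟨u₀, Finset.mem_erase.2 ⟨ne_of_lt hu₀m, hu₀C⟩⟩
    set m' := (C.erase m).max' hDne with hm'def
    have hm'D := (C.erase m).max'_mem hDne
    have hm'C : m' ∈ C := Finset.mem_of_mem_erase hm'D
    have hm'm : m' < m :=
      lt_of_le_of_ne (C.le_max' m' hm'C) (Finset.ne_of_mem_erase hm'D)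
    have hm'max : ∀ b, E m b → b ≠ m → b ≤ m' :=
      fun b hb hne => (C.erase m).le_max' b (Finset.mem_erase.2 ⟨hne, (hmem_C b).2 hb⟩)
    have hm'E : E m m' := (hmem_C m').1 hm'C
    set b₀ := C.min' hCne with hb₀def
    have hb₀C : b₀ ∈ C := C.min'_mem hCne
    have hb₀E : E m b₀ := (hmem_C b₀).1 hb₀C
    have hb₀le : ∀ b, E m b → b₀ ≤ b := fun b hb => C.min'_le b ((hmem_C b).2 hb)
    have hb₀m' : b₀ ≤ m' := hb₀le m' hm'E
    have hmmax : ∀ b, E m b → b ≤ m := fun b hb => C.le_max' b ((hmem_C b).2 hb)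
    -- the modified relation : `m` is split off into a singleton class
    set E' : Fin n → Fin n → Prop := fun a b => E a b ∧ (a = m ↔ b = m) with hE'def
    have hrefl' : ∀ a, E' a a := fun a => ⟨hrefl a, Iff.rfl⟩
    have hsymm' : ∀ a b, E' a b → E' b a := fun a b h => ⟨hsymm _ _ h.1, h.2.symm⟩
    have htrans' : ∀ a b c, E' a b → E' b c → E' a c :=
      fun a b c h1 h2 => ⟨htrans _ _ _ h1.1 h2.1, h1.2.trans h2.2⟩
    have hnc' : NCrel E' := by
      intro p1 q1 p2 q2 h1 h2 h3 e13 e24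
      refine ⟨hnc _ _ _ _ h1 h2 h3 e13.1 e24.1, ?_⟩
      constructor
      · intro hp1
        exfalso
        have hp2 : p2 = m := e13.2.1 hp1
        have : p1 < p2 := lt_trans h1 h2
        rw [hp1, hp2] at this; exact lt_irrefl _ this
      · intro hq1
        exfalso
        have hq2 : q2 = m := e24.2.1 hq1
        have : q1 < q2 := lt_trans h2 h3
        rw [hq1, hq2] at this
        exact lt_irrefl _ this
    have hnm' : nonmaxSet E' = (nonmaxSet E).erase m' := by
      ext u
      simp only [nonmaxSet, Finset.mem_filter, Finset.mem_univ, true_and, Finset.mem_erase]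
      constructor
      · rintro ⟨v, hv, hEv, hiff⟩
        refine ⟨?_, v, hv, hEv⟩
        rintro rfl
        have hvm : v ≠ m := by
          intro h; subst h
          exact absurd (hiff.2 rfl) hm'm.ne
        have hEmv : E m v := htrans _ _ _ hm'E hEv
        exact absurd (hm'max v hEmv hvm) (not_le.2 hv)
      · rintro ⟨hne, v, hv, hEv⟩
        by_cases hvm : v = m
        · subst hvm
          have hum : u ≠ m := ne_of_lt hv
          have hule : u ≤ m' := hm'max u (hsymm _ _ hEv) hum
          have hult : u < m' := lt_of_le_of_ne hule hne
          exact ⟨m', hult, htrans _ _ _ hEv hm'E, iff_of_false hum hm'm.ne⟩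
        · refine ⟨v, hv, hEv, iff_of_false ?_ hvm⟩
          rintro rfl
          exact absurd (hmmax v hEv) (not_le.2 hv)
    have hm'nm : m' ∈ nonmaxSet E := by
      simp only [nonmaxSet, Finset.mem_filter, Finset.mem_univ, true_and]
      exact ⟨m, hm'm, hsymm _ _ hm'E⟩
    have hcard' : (nonmaxSet E').card = (nonmaxSet E).card - 1 := by
      rw [hnm', Finset.card_erase_of_mem hm'nm]
    have hnmpos : 1 ≤ (nonmaxSet E).card := Finset.card_pos.2 ⟨m', hm'nm⟩
    have hIH := ih E' hrefl' hsymm' htrans' hnc' (by omega)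
    -- counting equations
    have c1 := maxSet_card_add_nonmaxSet_card E
    have c2 := maxSet_card_add_nonmaxSet_card E'
    -- the lost maxima
    set L := maxSet (kc E) \ maxSet (kc E') with hLdef
    have hLdata : ∀ u ∈ L, (∀ v, u < v → ¬ kc E u v) ∧ ∃ v, u < v ∧ kc E' u v := by
      intro u hu
      obtain ⟨hu1, hu2⟩ := Finset.mem_sdiff.1 hu
      simp only [maxSet, Finset.mem_filter, Finset.mem_univ, true_and] at hu1 hu2
      push_neg at hu2
      exact ⟨hu1, hu2⟩
    -- classification of new pairs
    have htype : ∀ u v : Fin n, u < v → kc E' u v → ¬ kc E u v →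
        (u < b₀ ∧ m' ≤ v ∧ v < m) ∨ (m' ≤ u ∧ u < m ∧ m ≤ v) := by
      intro u v huv hkc' hkcE
      rw [kc] at hkcE
      obtain ⟨p, hp⟩ := not_forall.1 hkcE
      obtain ⟨q, hq⟩ := not_forall.1 hp
      obtain ⟨hpq, hsep⟩ := _root_.not_imp.1 hq
      have key : ∀ p', E p' m → p' ≠ m → ¬((p' ≤ u ↔ p' ≤ v) ↔ (m ≤ u ↔ m ≤ v)) →
          (u < b₀ ∧ m' ≤ v ∧ v < m) ∨ (m' ≤ u ∧ u < m ∧ m ≤ v) := by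
        intro p' hp'm hp'ne hsepm
        have hp'le : p' ≤ m' := hm'max p' (hsymm _ _ hp'm) hp'ne
        have hsep2 : (u < p' ∧ p' ≤ v ∧ ¬(u < m ∧ m ≤ v)) ∨
            (u < m ∧ m ≤ v ∧ ¬(u < p' ∧ p' ≤ v)) := by
          revert hsepm huv; simp only [Fin.lt_def, Fin.le_def]; omega
        rcases hsep2 with ⟨h1, h2, h3⟩ | ⟨h1, h2, h3⟩
        · left
          have hvm : v < m := by
            revert h1 h2 h3 hp'le hm'm; simp only [Fin.lt_def, Fin.le_def]; omega
          have hall : ∀ b, E m b → b ≠ m → (u < b ∧ b ≤ v) := by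
            intro b hb hbne
            by_cases hbp : b = p'
            · subst hbp; exact ⟨h1, h2⟩
            · have hiter := hkc' p' b ⟨htrans _ _ _ hp'm hb, iff_of_false hp'ne hbne⟩
              revert hiter h1 h2 huv; simp only [Fin.lt_def, Fin.le_def]; omega
          have hb₀in := hall b₀ hb₀E (ne_of_lt (lt_of_le_of_lt hb₀m' hm'm))
          have hm'in := hall m' hm'E hm'm.ne
          exact ⟨hb₀in.1, hm'in.2, hvm⟩
        · right
          have hm'notin : ¬(u < m' ∧ m' ≤ v) := by
            rintro ⟨hh1, hh2⟩
            by_cases hm'p : m' = p'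
            · exact h3 (by rw [← hm'p]; exact ⟨hh1, hh2⟩)
            · have hiter := hkc' p' m'
                ⟨htrans _ _ _ hp'm hm'E, iff_of_false hp'ne hm'm.ne⟩
              apply h3
              revert hiter hh1 hh2 huv; simp only [Fin.lt_def, Fin.le_def]; omega
          refine ⟨?_, h1, h2⟩
          revert hm'notin hm'm h2; simp only [Fin.lt_def, Fin.le_def]; omega
      have hpmq : p = m ∨ q = m := by
        by_contra hcon; push_neg at hcon
        exact hsep (hkc' p q ⟨hpq, iff_of_false hcon.1 hcon.2⟩)
      rcases hpmq with rfl | rfl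
      · by_cases hqm : q = m
        · subst hqm; exact absurd Iff.rfl hsep
        · exact key q (hsymm _ _ hpq) hqm (fun h => hsep h.symm)
      · by_cases hpm : p = m
        · subst hpm; exact absurd Iff.rfl hsep
        · exact key p hpq hpm hsep
    -- at most one lost maximum
    have kill : ∀ u1 u2 : Fin n, u1 ∈ L → u2 ∈ L → u1 < u2 → False := by
      intro u1 u2 hu1L hu2L h12
      obtain ⟨hmax1, v1, hv1, hkc'1⟩ := hLdata u1 hu1L
      obtain ⟨hmax2, v2, hv2, hkc'2⟩ := hLdata u2 hu2L
      have ht1 := htype u1 v1 hv1 hkc'1 (hmax1 v1 hv1)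
      have ht2 := htype u2 v2 hv2 hkc'2 (hmax2 v2 hv2)
      rcases ht1 with ⟨ta1, ta2, ta3⟩ | ⟨ta1, ta2, ta3⟩ <;>
        rcases ht2 with ⟨tb1, tb2, tb3⟩ | ⟨tb1, tb2, tb3⟩
      -- case (1,1)
      · apply hmax1 u2 h12
        intro p q hpq
        by_contra hsep
        have inner : ∀ p q, E p q → u1 < q → q ≤ u2 → ¬(u1 < p ∧ p ≤ u2) → False := by
          intro p q hpq hq1 hq2 hpo
          have hqm : q ≠ m := by
            intro he; subst he
            revert hq2 tb1 hb₀m' hm'm; simp only [Fin.lt_def, Fin.le_def]; omega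
          have hpm : p ≠ m := by
            intro he; subst he
            have hbq := hb₀le q hpq
            revert hbq hq2 tb1; simp only [Fin.lt_def, Fin.le_def]; omega
          have h1 := hkc'1 p q ⟨hpq, iff_of_false hpm hqm⟩
          have h2 := hkc'2 p q ⟨hpq, iff_of_false hpm hqm⟩
          have hpv : v2 < p ∧ p ≤ v1 := by
            revert h1 h2 hq1 hq2 hpo h12 ta2 tb1 hb₀m' tb2 hv2
            simp only [Fin.lt_def, Fin.le_def]; omega
          have hcross := hnc q m' p m
            (by revert hq2 tb1 hb₀m'; simp only [Fin.lt_def, Fin.le_def]; omega)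
            (by revert hpv tb2; simp only [Fin.lt_def, Fin.le_def]; omega)
            (by revert hpv ta3; simp only [Fin.lt_def, Fin.le_def]; omega)
            (hsymm _ _ hpq) (hsymm _ _ hm'E)
          have hEmq : E m q := htrans _ _ _ hm'E (hsymm _ _ hcross)
          have hbq := hb₀le q hEmq
          revert hbq hq2 tb1; simp only [Fin.lt_def, Fin.le_def]; omega
        have hsepor : (u1 < p ∧ p ≤ u2 ∧ ¬(u1 < q ∧ q ≤ u2)) ∨
            (u1 < q ∧ q ≤ u2 ∧ ¬(u1 < p ∧ p ≤ u2)) := by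
          revert hsep h12; simp only [Fin.lt_def, Fin.le_def]; omega
        rcases hsepor with ⟨a1, a2, a3⟩ | ⟨a1, a2, a3⟩
        · exact inner q p (hsymm _ _ hpq) a1 a2 a3
        · exact inner p q hpq a1 a2 a3
      -- case (1,2) : u1 of type 1, u2 of type 2
      · have h1v2 : u1 < v2 := by
          revert ta1 hb₀m' tb1 tb2 tb3 hm'm; simp only [Fin.lt_def, Fin.le_def]; omega
        apply hmax1 v2 h1v2
        intro p q hpq
        by_contra hsep
        have inner : ∀ p q, E p q → u1 < q → q ≤ v2 → ¬(u1 < p ∧ p ≤ v2) → False := by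
          intro p q hpq hq1 hq2 hpo
          have hpm : p ≠ m := by
            intro he; subst he
            refine hpo ⟨?_, ?_⟩
            · revert ta1 hb₀m' hm'm; simp only [Fin.lt_def, Fin.le_def]; omega
            · exact tb3
          have hqm : q ≠ m := by
            intro he; subst he
            have hc1 := hb₀le p (hsymm _ _ hpq)
            have hc2 := hm'max p (hsymm _ _ hpq) hpm
            refine hpo ⟨?_, ?_⟩
            · revert hc1 ta1; simp only [Fin.lt_def, Fin.le_def]; omega
            · revert hc2 hm'm tb3; simp only [Fin.lt_def, Fin.le_def]; omega
          have h1 := hkc'1 p q ⟨hpq, iff_of_false hpm hqm⟩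
          have h2 := hkc'2 p q ⟨hpq, iff_of_false hpm hqm⟩
          have hpor : p ≤ u1 ∨ v2 < p := by
            revert hpo hq1 hq2; simp only [Fin.lt_def, Fin.le_def]; omega
          have hqmid : v1 < q ∧ q ≤ u2 := by
            rcases hpor with hc | hc
            · revert h1 h2 hq1 hq2 hc ta1 ta2 ta3 tb1 tb2 tb3 hb₀m' hm'm hv1 hv2 h12
              simp only [Fin.lt_def, Fin.le_def]; omega
            · revert h1 h2 hq1 hq2 hc ta1 ta2 ta3 tb1 tb2 tb3 hb₀m' hm'm hv1 hv2 h12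
              simp only [Fin.lt_def, Fin.le_def]; omega
          have hqnc : ¬ E m q := by
            intro hEq
            have hc3 := hm'max q hEq hqm
            revert hc3 hqmid ta2; simp only [Fin.lt_def, Fin.le_def]; omega
          rcases hpor with hc | hc
          · have hcross := hnc p m' q m
              (by revert hc ta1 hb₀m'; simp only [Fin.lt_def, Fin.le_def]; omega)
              (by revert hqmid ta2; simp only [Fin.lt_def, Fin.le_def]; omega)
              (by revert hqmid tb2; simp only [Fin.lt_def, Fin.le_def]; omega)
              hpq (hsymm _ _ hm'E)
            have hEmp : E m p := htrans _ _ _ hm'E (hsymm _ _ hcross)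
            have hbp := hb₀le p hEmp
            revert hbp hc ta1; simp only [Fin.lt_def, Fin.le_def]; omega
          · have hcross := hnc m' q m p
              (by revert hqmid ta2; simp only [Fin.lt_def, Fin.le_def]; omega)
              (by revert hqmid tb2; simp only [Fin.lt_def, Fin.le_def]; omega)
              (by revert tb3 hc; simp only [Fin.lt_def, Fin.le_def]; omega)
              (hsymm _ _ hm'E) (hsymm _ _ hpq)
            exact hqnc (htrans _ _ _ hm'E hcross)
        have hsepor : (u1 < p ∧ p ≤ v2 ∧ ¬(u1 < q ∧ q ≤ v2)) ∨
            (u1 < q ∧ q ≤ v2 ∧ ¬(u1 < p ∧ p ≤ v2)) := by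
          revert hsep h1v2; simp only [Fin.lt_def, Fin.le_def]; omega
        rcases hsepor with ⟨a1, a2, a3⟩ | ⟨a1, a2, a3⟩
        · exact inner q p (hsymm _ _ hpq) a1 a2 a3
        · exact inner p q hpq a1 a2 a3
      -- case (2,1) : impossible by ordering
      · revert ta1 tb1 h12 hb₀m'; simp only [Fin.lt_def, Fin.le_def]; omega
      -- case (2,2)
      · apply hmax1 u2 h12
        intro p q hpq
        by_contra hsep
        have inner : ∀ p q, E p q → u1 < q → q ≤ u2 → ¬(u1 < p ∧ p ≤ u2) → False := by
          intro p q hpq hq1 hq2 hpo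
          have hqm : q ≠ m := by
            intro he; subst he
            revert hq2 tb2; simp only [Fin.lt_def, Fin.le_def]; omega
          have hqnc : ¬ E m q := by
            intro hEq
            have hc3 := hm'max q hEq hqm
            revert hc3 hq1 ta1; simp only [Fin.lt_def, Fin.le_def]; omega
          have hpm : p ≠ m := by
            intro he; subst he
            exact hqnc hpq
          have h1 := hkc'1 p q ⟨hpq, iff_of_false hpm hqm⟩
          have h2 := hkc'2 p q ⟨hpq, iff_of_false hpm hqm⟩
          have hpbig : v2 < p := by
            revert h1 h2 hq1 hq2 hpo h12 tb2 ta3 hv2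
            simp only [Fin.lt_def, Fin.le_def]; omega
          have hcross := hnc m' q m p
            (by revert hq1 ta1; simp only [Fin.lt_def, Fin.le_def]; omega)
            (by revert hq2 tb2; simp only [Fin.lt_def, Fin.le_def]; omega)
            (by revert hpbig tb3; simp only [Fin.lt_def, Fin.le_def]; omega)
            (hsymm _ _ hm'E) (hsymm _ _ hpq)
          exact hqnc (htrans _ _ _ hm'E hcross)
        have hsepor : (u1 < p ∧ p ≤ u2 ∧ ¬(u1 < q ∧ q ≤ u2)) ∨
            (u1 < q ∧ q ≤ u2 ∧ ¬(u1 < p ∧ p ≤ u2)) := by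
          revert hsep h12; simp only [Fin.lt_def, Fin.le_def]; omega
        rcases hsepor with ⟨a1, a2, a3⟩ | ⟨a1, a2, a3⟩
        · exact inner q p (hsymm _ _ hpq) a1 a2 a3
        · exact inner p q hpq a1 a2 a3
    have hLone : L.card ≤ 1 := by
      apply Finset.card_le_one.2
      intro a ha b hb
      rcases lt_trichotomy a b with h | h | h
      · exact absurd (kill a b ha hb h) id
      · exact h
      · exact absurd (kill b a hb ha h) id
    have hsubset : maxSet (kc E) ⊆ maxSet (kc E') ∪ L := by
      intro x hx
      by_cases h : x ∈ maxSet (kc E')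
      · exact Finset.mem_union_left _ h
      · exact Finset.mem_union_right _ (Finset.mem_sdiff.2 ⟨hx, h⟩)
    have hfinal : (maxSet (kc E)).card ≤ (maxSet (kc E')).card + 1 := by
      calc (maxSet (kc E)).card ≤ (maxSet (kc E') ∪ L).card := Finset.card_le_card hsubset
        _ ≤ (maxSet (kc E')).card + L.card := Finset.card_union_le _ _
        _ ≤ (maxSet (kc E')).card + 1 := by omega
    omega

lemma kc_count_le (hn : 1 ≤ n) (E : Fin n → Fin n → Prop)
    (hrefl : ∀ a, E a a) (hsymm : ∀ a b, E a b → E b a)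
    (htrans : ∀ a b c, E a b → E b c → E a c) (hnc : NCrel E) :
    (maxSet E).card + (maxSet (kc E)).card ≤ n + 1 :=
  kc_count_aux hn (nonmaxSet E).card E hrefl hsymm htrans hnc le_rfl

end KrewerasAux

open KrewerasAux

/-- If a noncrossing partition `π` of an `n`-element totally ordered set has `j`
classes, then its Kreweras complement (the biggest noncrossing partition `σ` of the
barred copy such that `π ∪ σ` is noncrossing on the interlaced set) has exactly
`n - j + 1` classes. -/
theorem kreweras_card_classes (n : ℕ) (hn : 1 ≤ n)
    (π σ : Finpartition (Finset.univ : Finset (Fin n)))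
    (hπ : IsNoncrossing π) (hσ : IsNoncrossing σ)
    (hun : InterlacedNoncrossing π σ)
    (hmax : ∀ σ' : Finpartition (Finset.univ : Finset (Fin n)),
      IsNoncrossing σ' → InterlacedNoncrossing π σ' → Refines σ' σ) :
    σ.parts.card = n - π.parts.card + 1 := by
  classical
  set E := spart π with hEdef
  have hErefl : ∀ a, E a a := spart_refl π
  have hEsymm : ∀ a b, E a b → E b a := fun a b h => spart_symm h
  have hEtrans : ∀ a b c, E a b → E b c → E a c := fun a b c h1 h2 => spart_trans h1 h2
  have hncE : NCrel E := (isNoncrossing_iff_NCrel π).1 hπ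
  -- the explicit Kreweras complement
  let S : Setoid (Fin n) := ⟨kc E, ⟨kc_refl E, fun h => kc_symm h, fun h1 h2 => kc_trans h1 h2⟩⟩
  let τ : Finpartition (Finset.univ : Finset (Fin n)) := Finpartition.ofSetoid S
  have iffa : ∀ a b, spart τ a b ↔ kc E a b := by
    intro a b
    constructor
    · rintro ⟨B, hB, ha, hb⟩
      have hBp : τ.part a = B := τ.part_eq_of_mem hB ha
      have hbmem : b ∈ τ.part a := hBp ▸ hb
      exact Finpartition.mem_part_ofSetoid_iff_rel.1 hbmem
    · intro h
      exact ⟨τ.part a, τ.part_mem.2 (Finset.mem_univ a),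
        τ.mem_part_self.2 (Finset.mem_univ a), Finpartition.mem_part_ofSetoid_iff_rel.2 h⟩
  have hncτ : NCrel (spart τ) := by
    intro p1 q1 p2 q2 h1 h2 h3 hp hq
    exact (iffa _ _).2 (NCrel_kc E hEsymm p1 q1 p2 q2 h1 h2 h3 ((iffa _ _).1 hp) ((iffa _ _).1 hq))
  have hτNC : IsNoncrossing τ := (isNoncrossing_iff_NCrel τ).2 hncτ
  -- the interlaced union is noncrossing
  have hτun : InterlacedNoncrossing π τ := by
    rintro ⟨p1, q1, p2, q2, h1, h2, h3, t13, t24, hn13⟩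
    have dp1 : (half p1).1 = p1.1 / 2 := rfl
    have dq1 : (half q1).1 = q1.1 / 2 := rfl
    have dp2 : (half p2).1 = p2.1 / 2 := rfl
    have dq2 : (half q2).1 = q2.1 / 2 := rfl
    rcases t13 with ⟨e1, e2, B, hB, m1, m2⟩ | ⟨e1, e2, B, hB, m1, m2⟩ <;>
      rcases t24 with ⟨o1, o2, C, hC, m3, m4⟩ | ⟨o1, o2, C, hC, m3, m4⟩
    · -- even-even : crossing of π
      have hne : B ≠ C := by
        intro he
        exact hn13 (Or.inl ⟨e1, o1, B, hB, m1, he ▸ m3⟩)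
      apply hπ
      refine ⟨half p1, half q1, half p2, half q2, ?_, ?_, ?_, B, hB, C, hC, hne, m1, m2, m3, m4⟩
      all_goals
        revert h1 h2 h3 e1 e2 o1 o2 dp1 dq1 dp2 dq2
        simp only [Fin.lt_def, Fin.le_def]
        omega
    · -- even-odd : the pair of π separates a kc pair
      have hkcq : kc E (half q1) (half q2) := (iffa _ _).1 ⟨C, hC, m3, m4⟩
      have hiter := hkcq (half p1) (half p2) ⟨B, hB, m1, m2⟩
      revert hiter h1 h2 h3 e1 e2 o1 o2 dp1 dq1 dp2 dq2
      simp only [Fin.lt_def, Fin.le_def]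
      omega
    · -- odd-even
      have hkcq : kc E (half p1) (half p2) := (iffa _ _).1 ⟨B, hB, m1, m2⟩
      have hiter := hkcq (half q1) (half q2) ⟨C, hC, m3, m4⟩
      revert hiter h1 h2 h3 e1 e2 o1 o2 dp1 dq1 dp2 dq2
      simp only [Fin.lt_def, Fin.le_def]
      omega
    · -- odd-odd : crossing of τ
      have hsp : spart τ (half p1) (half q1) := by
        apply hncτ (half p1) (half q1) (half p2) (half q2)
        · revert h1 e1 o1 dp1 dq1; simp only [Fin.lt_def]; omega
        · revert h2 o1 e2 dq1 dp2; simp only [Fin.lt_def]; omega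
        · revert h3 e2 o2 dp2 dq2; simp only [Fin.lt_def]; omega
        · exact ⟨B, hB, m1, m2⟩
        · exact ⟨C, hC, m3, m4⟩
      obtain ⟨D, hD, hd1, hd2⟩ := hsp
      exact hn13 (Or.inr ⟨e1, o1, D, hD, hd1, hd2⟩)
  -- maximality : σ is coarser than τ
  have href : Refines τ σ := hmax τ hτNC hτun
  have hble : σ.parts.card ≤ τ.parts.card := by
    set f : Finset (Fin n) → Finset (Fin n) :=
      fun C => if h : C.Nonempty then τ.part (C.min' h) else ∅ with hfdef
    have hfs : ∀ C ∈ σ.parts, f C ∈ τ.parts ∧ f C ⊆ C ∧ (f C).Nonempty := by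
      intro C hC
      have hCne : C.Nonempty := σ.nonempty_of_mem_parts hC
      have hx : C.min' hCne ∈ C := C.min'_mem hCne
      rw [hfdef]
      simp only [dif_pos hCne]
      have hpm : τ.part (C.min' hCne) ∈ τ.parts := τ.part_mem.2 (Finset.mem_univ _)
      obtain ⟨C', hC', hsub⟩ := href _ hpm
      have hxC' : C.min' hCne ∈ C' := hsub (τ.mem_part_self.2 (Finset.mem_univ _))
      have : C' = C := σ.eq_of_mem_parts hC' hC hxC' hx
      exact ⟨hpm, this ▸ hsub, ⟨_, τ.mem_part_self.2 (Finset.mem_univ _)⟩⟩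
    apply Finset.card_le_card_of_injOn f (fun C hC => (hfs C hC).1)
    intro C1 hC1 C2 hC2 he
    obtain ⟨-, hsub1, hne1⟩ := hfs C1 hC1
    obtain ⟨-, hsub2, -⟩ := hfs C2 hC2
    obtain ⟨x, hx⟩ := hne1
    exact σ.eq_of_mem_parts hC1 hC2 (hsub1 hx) (hsub2 (he ▸ hx))
  -- counting
  have hc1 : π.parts.card = (maxSet E).card := parts_card_eq_maxSet_card π
  have hc2 : σ.parts.card = (maxSet (spart σ)).card := parts_card_eq_maxSet_card σ
  have hc3 : τ.parts.card = (maxSet (kc E)).card := by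
    rw [parts_card_eq_maxSet_card τ, maxSet_congr iffa]
  have hup : (maxSet E).card + (maxSet (kc E)).card ≤ n + 1 :=
    kc_count_le hn E hErefl hEsymm hEtrans hncE
  have hlo := total_ge π σ hun
  rw [← hEdef] at hlo
  have he1 := maxSet_card_add_nonmaxSet_card E
  have he2 := maxSet_card_add_nonmaxSet_card (spart σ)
  omega
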